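/- arXiv:1901.02317 — 2 statements merged into one kernel-verified Lean document; each statement's English description precedes it below -/
import Mathlib

section
/- Let C : ℝⁿ → ℝ be a bounded measurable function. Then for every s > 0, ∫_{[−s,s]ⁿ} ∫_{[−s,s]ⁿ} C(x−y) dx dy = (2s)ⁿ ∫_{[−2s,2s]ⁿ} C(x) ∏_{i=1}^n (1 − |x_i|/(2s)) dx. -/
open MeasureTheory Filter Topology
open scoped BigOperators

noncomputable section

/-- The cube `[-s,s]^n` in `ℝ^n`. -/
def cube (n : ℕ) (s : ℝ) : Set (Fin n → ℝ) := Set.Icc (fun _ => -s) (fun _ => s)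

/-- identity (5.2). For bounded measurable `C : ℝⁿ → ℝ` and `s > 0`,
`∫_{[-s,s]ⁿ}∫_{[-s,s]ⁿ} C(x-y) dx dy = (2s)ⁿ ∫_{[-2s,2s]ⁿ} C(x) ∏ᵢ (1 - |xᵢ|/(2s)) dx`. -/
theorem stmt7 {n : ℕ} (C : (Fin n → ℝ) → ℝ) (hmeas : Measurable C)
    (hbdd : ∃ M : ℝ, ∀ x, |C x| ≤ M) (s : ℝ) (hs : 0 < s) :
    ∫ x in cube n s, ∫ y in cube n s, C (x - y) =
      (2*s) ^ n * ∫ x in cube n (2*s), C x * ∏ i, (1 - |x i| / (2*s)) := by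
  classical
  obtain ⟨M, hM⟩ := hbdd
  have hM0 : 0 ≤ M := (abs_nonneg _).trans (hM 0)
  have h2s : (0:ℝ) < 2*s := by linarith
  set Q : Set (Fin n → ℝ) := cube n s with hQdef
  set Q2 : Set (Fin n → ℝ) := cube n (2*s) with hQ2def
  have hQm : MeasurableSet Q := measurableSet_Icc
  have hQ2m : MeasurableSet Q2 := measurableSet_Icc
  set e : (Fin n → ℝ) → ℝ := Q.indicator (fun _ => (1:ℝ)) with he
  have hem : Measurable e := (measurable_const.indicator hQm)
  -- step 1: inner integral rewrite via translation invariance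
  have step1 : ∀ x : Fin n → ℝ, ∫ y in Q, C (x - y) = ∫ z, e (x - z) * C z := by
    intro x
    rw [← integral_indicator hQm]
    have h1 : ∀ y : Fin n → ℝ, Q.indicator (fun y => C (x - y)) y
        = (fun z => e (x - z) * C z) (x - y) := by
      intro y
      by_cases hy : y ∈ Q
      · simp [he, Set.indicator_of_mem, hy, sub_sub_cancel]
      · simp [he, Set.indicator_of_notMem, hy, sub_sub_cancel]
    simp_rw [h1]
    exact integral_sub_left_eq_self (fun z => e (x - z) * C z) volume x
  -- step 2: pull the outer indicator inside
  have step2 : ∫ x in cube n s, ∫ y in cube n s, C (x - y)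
      = ∫ x, ∫ z, (e x * e (x - z)) * C z := by
    rw [show cube n s = Q from rfl, ← integral_indicator hQm]
    congr 1
    funext x
    by_cases hx : x ∈ Q
    · rw [Set.indicator_of_mem hx, step1 x]
      simp [he, Set.indicator_of_mem, hx]
    · rw [Set.indicator_of_notMem hx]
      have : ∀ z : Fin n → ℝ, (e x * e (x - z)) * C z = 0 := by
        intro z
        simp [he, Set.indicator_of_notMem, hx]
      simp [this]
  -- integrability on the product space
  have hprodvol : (volume.prod volume) (Q ×ˢ Q2) < ⊤ := by
    rw [Measure.prod_prod]
    exact ENNReal.mul_lt_top (isCompact_Icc.measure_lt_top) (isCompact_Icc.measure_lt_top)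
  have hg : Integrable ((Q ×ˢ Q2).indicator fun _ => M) (volume.prod volume) := by
    rw [integrable_indicator_iff (hQm.prod hQ2m)]
    exact integrableOn_const hprodvol.ne
  have hfm : Measurable (Function.uncurry fun x z : Fin n → ℝ => (e x * e (x - z)) * C z) := by
    exact ((hem.comp measurable_fst).mul
      (hem.comp (measurable_fst.sub measurable_snd))).mul (hmeas.comp measurable_snd)
  have hbound : ∀ p : (Fin n → ℝ) × (Fin n → ℝ),
      ‖(Function.uncurry fun x z : Fin n → ℝ => (e x * e (x - z)) * C z) p‖
        ≤ (Q ×ˢ Q2).indicator (fun _ => M) p := by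
    rintro ⟨x, z⟩
    by_cases hx : x ∈ Q
    · by_cases hz : x - z ∈ Q
      · have hzQ2 : z ∈ Q2 := by
          simp only [hQdef, cube, Set.mem_Icc, Pi.le_def, Pi.sub_apply] at hx hz
          simp only [hQ2def, cube, Set.mem_Icc, Pi.le_def]
          exact ⟨fun i => by show -(2*s) ≤ z i; linarith [hx.1 i, hz.2 i],
            fun i => by show z i ≤ 2*s; linarith [hx.2 i, hz.1 i]⟩
        rw [Set.indicator_of_mem (Set.mk_mem_prod hx hzQ2)]
        simp only [Function.uncurry_apply_pair, he, Set.indicator_of_mem hx,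
          Set.indicator_of_mem hz, one_mul]
        exact hM z
      · simp only [Function.uncurry_apply_pair, he, Set.indicator_of_notMem hz, mul_zero,
          zero_mul, norm_zero]
        exact Set.le_indicator_apply (fun _ => hM0) (fun _ => le_refl 0)
    · simp only [Function.uncurry_apply_pair, he, Set.indicator_of_notMem hx, zero_mul,
        norm_zero]
      exact Set.le_indicator_apply (fun _ => hM0) (fun _ => le_refl 0)
  have hint : Integrable (Function.uncurry fun x z : Fin n → ℝ => (e x * e (x - z)) * C z)
      (volume.prod volume) :=
    Integrable.mono' hg hfm.aestronglyMeasurable (Filter.Eventually.of_forall hbound)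
  -- step 3: Fubini swap
  have step3 : ∫ x, ∫ z, (e x * e (x - z)) * C z = ∫ z, ∫ x, (e x * e (x - z)) * C z :=
    integral_integral_swap hint
  -- step 4: compute the inner integral as a volume
  have key : ∀ t : ℝ, min s (t + s) - max (-s) (t - s) = 2*s - |t| := by
    intro t
    rcases le_total t 0 with h | h
    · rw [abs_of_nonpos h, min_eq_right (by linarith), max_eq_left (by linarith)]
      ring
    · rw [abs_of_nonneg h, min_eq_left (by linarith), max_eq_right (by linarith)]
      ring
  have step4 : ∀ z : Fin n → ℝ,
      ∫ x, (e x * e (x - z)) * C z = (∏ i, max (2*s - |z i|) 0) * C z := by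
    intro z
    rw [integral_mul_const]
    congr 1
    have hSm : MeasurableSet {x : Fin n → ℝ | x ∈ Q ∧ x - z ∈ Q} :=
      (hQm.inter (hQm.preimage (measurable_id.sub measurable_const)))
    have hee : (fun x => e x * e (x - z))
        = {x : Fin n → ℝ | x ∈ Q ∧ x - z ∈ Q}.indicator (fun _ => (1:ℝ)) := by
      funext x
      by_cases hx : x ∈ Q
      · by_cases hz' : x - z ∈ Q
        · simp [he, Set.indicator_of_mem, hx, hz', Set.mem_setOf_eq]
        · simp [he, Set.indicator_of_mem hx, Set.indicator_of_notMem hz',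
            Set.indicator_of_notMem (show x ∉ {x : Fin n → ℝ | x ∈ Q ∧ x - z ∈ Q} from
              fun h => hz' h.2)]
      · simp [he, Set.indicator_of_notMem hx,
          Set.indicator_of_notMem (show x ∉ {x : Fin n → ℝ | x ∈ Q ∧ x - z ∈ Q} from
            fun h => hx h.1)]
    rw [hee]
    rw [show ({x : Fin n → ℝ | x ∈ Q ∧ x - z ∈ Q}.indicator (fun _ => (1:ℝ)))
        = ({x : Fin n → ℝ | x ∈ Q ∧ x - z ∈ Q}.indicator (1 : (Fin n → ℝ) → ℝ)) from rfl]
    rw [integral_indicator_one hSm]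
    -- compute the volume
    have hset : {x : Fin n → ℝ | x ∈ Q ∧ x - z ∈ Q}
        = Set.Icc (fun i => max (-s) (z i - s)) (fun i => min s (z i + s)) := by
      ext x
      simp only [hQdef, cube, Set.mem_setOf_eq, Set.mem_Icc, Pi.le_def, Pi.sub_apply,
        Pi.add_apply, max_le_iff, le_min_iff, neg_le_sub_iff_le_add, sub_le_iff_le_add]
      constructor
      · rintro ⟨⟨h1, h2⟩, h3, h4⟩
        exact ⟨fun i => ⟨h1 i, by linarith [h3 i]⟩, fun i => ⟨h2 i, by linarith [h4 i]⟩⟩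
      · rintro ⟨h1, h2⟩
        exact ⟨⟨fun i => (h1 i).1, fun i => (h2 i).1⟩,
          fun i => by linarith [(h1 i).2], fun i => by linarith [(h2 i).2]⟩
    rw [hset, measureReal_def, Real.volume_Icc_pi, ENNReal.toReal_prod]
    refine Finset.prod_congr rfl fun i _ => ?_
    rw [key (z i), ENNReal.toReal_ofReal']
  -- step 5: restrict to the big cube
  have hfun : (fun z => (∏ i, max (2*s - |z i|) 0) * C z)
      = Q2.indicator (fun z => (∏ i, (2*s - |z i|)) * C z) := by
    funext z
    by_cases hz : z ∈ Q2
    · rw [Set.indicator_of_mem hz]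
      congr 1
      refine Finset.prod_congr rfl fun i _ => ?_
      have h1 : |z i| ≤ 2*s := by
        simp only [hQ2def, cube, Set.mem_Icc, Pi.le_def] at hz
        exact abs_le.2 ⟨by simpa using hz.1 i, hz.2 i⟩
      exact max_eq_left (by linarith)
    · rw [Set.indicator_of_notMem hz]
      obtain ⟨i, hi⟩ : ∃ i, 2*s < |z i| := by
        by_contra h
        push_neg at h
        refine hz ?_
        simp only [hQ2def, cube, Set.mem_Icc, Pi.le_def]
        exact ⟨fun i => by simpa using (abs_le.1 (h i)).1, fun i => (abs_le.1 (h i)).2⟩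
      have h0 : (2*s - |z i|) ⊔ 0 = 0 := max_eq_right (by linarith)
      rw [Finset.prod_eq_zero (Finset.mem_univ i) h0, zero_mul]
  -- step 6: identify with RHS
  have hpt : ∀ x : Fin n → ℝ,
      (2*s)^n * (C x * ∏ i, (1 - |x i| / (2*s))) = (∏ i, (2*s - |x i|)) * C x := by
    intro x
    have h1 : ((2*s)^n : ℝ) * ∏ i, (1 - |x i| / (2*s)) = ∏ i, (2*s - |x i|) := by
      rw [show ((2*s)^n : ℝ) = ∏ _i : Fin n, (2*s) by simp [Finset.prod_const],
        ← Finset.prod_mul_distrib]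
      refine Finset.prod_congr rfl fun i _ => ?_
      field_simp
    calc (2*s)^n * (C x * ∏ i, (1 - |x i| / (2*s)))
        = ((2*s)^n * ∏ i, (1 - |x i| / (2*s))) * C x := by ring
      _ = (∏ i, (2*s - |x i|)) * C x := by rw [h1]
  calc ∫ x in cube n s, ∫ y in cube n s, C (x - y)
      = ∫ x, ∫ z, (e x * e (x - z)) * C z := step2
    _ = ∫ z, ∫ x, (e x * e (x - z)) * C z := step3
    _ = ∫ z, (∏ i, max (2*s - |z i|) 0) * C z := by
        congr 1; funext z; exact step4 z
    _ = ∫ z in Q2, (∏ i, (2*s - |z i|)) * C z := by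
        rw [hfun, integral_indicator hQ2m]
    _ = ∫ z in Q2, (2*s)^n * (C z * ∏ i, (1 - |z i| / (2*s))) := by
        congr 1; funext z; rw [hpt z]
    _ = (2*s) ^ n * ∫ x in cube n (2*s), C x * ∏ i, (1 - |x i| / (2*s)) := by
        rw [integral_const_mul]
end
end

section
/- Let C ∈ L¹(ℝⁿ) and let 0 < y₁ ≤ y₂. Setting s₁ = s·y₁^{1/n} and s₂ = s·y₂^{1/n}, one has lim_{s→∞} (2s)^{−n} ∫_{[−s₁,s₁]ⁿ} ∫_{[−s₂,s₂]ⁿ} C(x−y) dx dy = y₁ ∫_{ℝⁿ} C(u) du. -/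
open MeasureTheory Filter Topology
open scoped BigOperators

noncomputable section

lemma cube_meas {n : ℕ} (s : ℝ) : MeasurableSet (cube n s) := measurableSet_Icc

/-- Fubini step: the double integral equals `∫ C u * vol(cube a ∩ (u + cube b))`. -/
lemma step1 {n : ℕ} (C : (Fin n → ℝ) → ℝ) (hC : Integrable C (volume : Measure (Fin n → ℝ)))
    (a b : ℝ) :
    (∫ x in cube n a, ∫ y in cube n b, C (x - y)) =
      ∫ u, C u * (volume (cube n a ∩ {x | x - u ∈ cube n b})).toReal := by
  set S := cube n a with hSdef
  set T := cube n b with hTdef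
  have hS : MeasurableSet S := cube_meas a
  have hT : MeasurableSet T := cube_meas b
  set f : (Fin n → ℝ) → (Fin n → ℝ) → ℝ :=
    fun x u => S.indicator 1 x * (T.indicator 1 (x - u) * C u) with hfdef
  -- inner substitution
  have hinner : ∀ x, (∫ y in T, C (x - y)) = ∫ u, T.indicator 1 (x - u) * C u := by
    intro x
    rw [← integral_indicator hT,
      ← integral_sub_left_eq_self (fun y => T.indicator (fun y => C (x - y)) y) volume x]
    congr 1; funext u
    by_cases h : x - u ∈ T
    · simp [Set.indicator_of_mem h, sub_sub_cancel]
    · simp [Set.indicator_of_notMem h]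
  have h1 : (∫ x in S, ∫ y in T, C (x - y)) = ∫ x, ∫ u, f x u := by
    rw [← integral_indicator hS]
    congr 1; funext x
    by_cases h : x ∈ S
    · rw [Set.indicator_of_mem h, hinner x]
      simp [hfdef, Set.indicator_of_mem h]
    · simp [hfdef, Set.indicator_of_notMem h]
  -- integrability on the product
  have hSind : Integrable (S.indicator (1 : (Fin n → ℝ) → ℝ)) volume := by
    rw [integrable_indicator_iff hS]
    exact integrableOn_const (isCompact_Icc.measure_lt_top.ne)
  have hbig : Integrable (fun z : (Fin n → ℝ) × (Fin n → ℝ) => S.indicator 1 z.1 * C z.2)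
      ((volume : Measure (Fin n → ℝ)).prod volume) := hSind.mul_prod hC
  have hmeas : AEStronglyMeasurable (Function.uncurry f)
      ((volume : Measure (Fin n → ℝ)).prod volume) := by
    have m1 : Measurable (fun z : (Fin n → ℝ) × (Fin n → ℝ) => S.indicator (1 : (Fin n → ℝ) → ℝ) z.1) :=
      (measurable_one.indicator hS).comp measurable_fst
    have m2 : Measurable (fun z : (Fin n → ℝ) × (Fin n → ℝ) => T.indicator (1 : (Fin n → ℝ) → ℝ) (z.1 - z.2)) :=
      (measurable_one.indicator hT).comp (measurable_fst.sub measurable_snd)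
    exact (m1.aestronglyMeasurable.mul (m2.aestronglyMeasurable.mul hC.1.comp_snd))
  have hint : Integrable (Function.uncurry f) ((volume : Measure (Fin n → ℝ)).prod volume) := by
    refine hbig.mono hmeas (ae_of_all _ fun z => ?_)
    rcases z with ⟨x, u⟩
    by_cases hx : x ∈ S <;> by_cases hu : x - u ∈ T <;>
      simp [Function.uncurry, hfdef, Set.indicator_of_mem, Set.indicator_of_notMem, hx, hu,
        abs_nonneg]
  have h2 : (∫ x, ∫ u, f x u) = ∫ u, ∫ x, f x u := integral_integral_swap hint
  have h3 : ∀ u, (∫ x, f x u) = C u * (volume (S ∩ {x | x - u ∈ T})).toReal := by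
    intro u
    have hW : MeasurableSet {x : Fin n → ℝ | x - u ∈ T} :=
      hT.preimage (measurable_id.sub measurable_const)
    have hpt : ∀ x, f x u = (S ∩ {x : Fin n → ℝ | x - u ∈ T}).indicator 1 x * C u := by
      intro x
      by_cases hx : x ∈ S <;> by_cases hxu : x - u ∈ T <;>
        simp [hfdef, Set.indicator_of_mem, Set.indicator_of_notMem, hx, hxu,
          Set.indicator_apply, Set.mem_inter_iff]
    calc (∫ x, f x u) = ∫ x, (S ∩ {x : Fin n → ℝ | x - u ∈ T}).indicator 1 x * C u := by
          simp only [hpt]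
      _ = (∫ x, (S ∩ {x : Fin n → ℝ | x - u ∈ T}).indicator 1 x) * C u :=
          integral_mul_const _ _
      _ = (volume (S ∩ {x : Fin n → ℝ | x - u ∈ T})).toReal * C u := by
          rw [integral_indicator_one (hS.inter hW)]; rfl
      _ = C u * (volume (S ∩ {x : Fin n → ℝ | x - u ∈ T})).toReal := mul_comm _ _
  rw [h1, h2]
  exact integral_congr_ae (ae_of_all _ h3)

/-- Volume of the intersection of the boxes, explicitly. -/
lemma step2 {n : ℕ} (a b : ℝ) (u : Fin n → ℝ) :
    (volume (cube n a ∩ {x | x - u ∈ cube n b})).toReal =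
      ∏ i, ((min a (u i + b) - max (-a) (u i - b)) ⊔ 0) := by
  have hset : {x : Fin n → ℝ | x - u ∈ cube n b} =
      Set.Icc (fun i => u i - b) (fun i => u i + b) := by
    ext x
    simp only [cube, Set.mem_setOf_eq, Set.mem_Icc, Pi.le_def, Pi.sub_apply]
    constructor
    · rintro ⟨h1, h2⟩
      exact ⟨fun i => by linarith [h1 i, h2 i], fun i => by linarith [h1 i, h2 i]⟩
    · rintro ⟨h1, h2⟩
      exact ⟨fun i => by linarith [h1 i, h2 i], fun i => by linarith [h1 i, h2 i]⟩
  rw [hset, cube, Set.Icc_inter_Icc, Real.volume_Icc_pi, ENNReal.toReal_prod]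
  refine Finset.prod_congr rfl fun i _ => ?_
  simp [Pi.inf_apply, Pi.sup_apply, ENNReal.toReal_ofReal', min_comm, max_comm]

lemma factor_tendsto (p q c : ℝ) (hp : 0 < p) (hpq : p ≤ q) :
    Tendsto (fun s : ℝ => ((min (s * p) (c + s * q) - max (-(s * p)) (c - s * q)) ⊔ 0) / (2 * s))
      atTop (𝓝 p) := by
  have hcs : Tendsto (fun s : ℝ => c / s) atTop (𝓝 0) := by
    simpa [div_eq_mul_inv] using tendsto_inv_atTop_zero.const_mul c
  have hlim : Tendsto
      (fun s : ℝ => ((min p (c / s + q) - max (-p) (c / s - q)) ⊔ 0) / 2) atTop (𝓝 p) := by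
    have : Tendsto (fun s : ℝ => ((min p (c / s + q) - max (-p) (c / s - q)) ⊔ 0) / 2) atTop
        (𝓝 (((min p (0 + q) - max (-p) (0 - q)) ⊔ 0) / 2)) := by
      exact (((tendsto_const_nhds.min (hcs.add tendsto_const_nhds)).sub
        (tendsto_const_nhds.max (hcs.sub tendsto_const_nhds))).max tendsto_const_nhds).div_const 2
    convert this using 2
    rw [zero_add, zero_sub, min_eq_left hpq, max_eq_left (by linarith : -q ≤ -p)]
    have : p - -p = 2 * p := by ring
    rw [this, max_eq_left (by linarith : (0:ℝ) ≤ 2 * p)]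
    field_simp
  refine hlim.congr' ?_
  filter_upwards [eventually_gt_atTop (0:ℝ)] with s hs
  have hs' : (0:ℝ) ≤ s := hs.le
  have e1 : s * (p ⊓ (c / s + q)) = s * p ⊓ (c + s * q) := by
    rw [mul_min_of_nonneg _ _ hs']
    congr 1
    field_simp
  have e2 : s * (-p ⊔ (c / s - q)) = -(s * p) ⊔ (c - s * q) := by
    rw [mul_max_of_nonneg _ _ hs']
    congr 1
    · ring
    · field_simp
  have e3 : (s * p ⊓ (c + s * q) - (-(s * p) ⊔ (c - s * q))) ⊔ 0
      = s * ((p ⊓ (c / s + q) - (-p ⊔ (c / s - q))) ⊔ 0) := by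
    rw [mul_max_of_nonneg _ _ hs', mul_zero, mul_sub, e1, e2]
  show _ = _
  rw [e3, mul_comm 2 s, mul_div_mul_left _ _ hs.ne']

/-- For `C ∈ L¹(ℝⁿ)` and `0 < y₁ ≤ y₂`, with `s₁ = s·y₁^{1/n}` and
`s₂ = s·y₂^{1/n}`,
`(2s)^{-n} ∫_{[-s₁,s₁]ⁿ}∫_{[-s₂,s₂]ⁿ} C(x-y) dx dy → y₁ ∫_{ℝⁿ} C(u) du` as `s → ∞`. -/
theorem stmt11 {n : ℕ} (hn : 1 ≤ n) (C : (Fin n → ℝ) → ℝ)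
    (hC : Integrable C (volume : Measure (Fin n → ℝ)))
    (y₁ y₂ : ℝ) (h1 : 0 < y₁) (h12 : y₁ ≤ y₂) :
    Tendsto
      (fun s : ℝ => ((2*s) ^ n)⁻¹ *
        ∫ x in cube n (s * y₁ ^ ((n:ℝ)⁻¹)), ∫ y in cube n (s * y₂ ^ ((n:ℝ)⁻¹)),
          C (x - y))
      atTop (𝓝 (y₁ * ∫ u, C u)) := by
  have hn0 : n ≠ 0 := Nat.one_le_iff_ne_zero.mp hn
  set p := y₁ ^ ((n:ℝ)⁻¹) with hpdef
  set q := y₂ ^ ((n:ℝ)⁻¹) with hqdef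
  have hp : 0 < p := Real.rpow_pos_of_pos h1 _
  have hpq : p ≤ q := Real.rpow_le_rpow h1.le h12 (by positivity)
  have hpn : p ^ n = y₁ := Real.rpow_inv_natCast_pow h1.le hn0
  set K : ℝ → (Fin n → ℝ) → ℝ :=
    fun s u => ∏ i, ((min (s*p) (u i + s*q) - max (-(s*p)) (u i - s*q)) ⊔ 0) with hKdef
  set F : ℝ → (Fin n → ℝ) → ℝ := fun s u => C u * (((2*s) ^ n)⁻¹ * K s u) with hFdef
  have hIs : ∀ s : ℝ, ((2*s)^n)⁻¹ *
      (∫ x in cube n (s * p), ∫ y in cube n (s * q), C (x - y)) = ∫ u, F s u := by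
    intro s
    rw [step1 C hC (s*p) (s*q), ← integral_const_mul]
    refine integral_congr_ae (ae_of_all _ fun u => ?_)
    beta_reduce
    rw [step2 (s*p) (s*q) u]
    simp only [hFdef, hKdef]
    ring
  have hKlim : ∀ u : Fin n → ℝ, Tendsto (fun s => ((2*s)^n)⁻¹ * K s u) atTop (𝓝 y₁) := by
    intro u
    have h := tendsto_finset_prod (f := fun i (s : ℝ) =>
        ((min (s*p) (u i + s*q) - max (-(s*p)) (u i - s*q)) ⊔ 0) / (2*s))
      (x := atTop) (a := fun _ => p) Finset.univ
      (fun i _ => factor_tendsto p q (u i) hp hpq)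
    have hc : (∏ _i : Fin n, p) = y₁ := by
      rw [Finset.prod_const, Finset.card_univ, Fintype.card_fin, hpn]
    rw [hc] at h
    refine h.congr' ?_
    filter_upwards [eventually_gt_atTop (0:ℝ)] with s hs
    rw [Finset.prod_div_distrib, Finset.prod_const, Finset.card_univ, Fintype.card_fin,
      div_eq_inv_mul, mul_pow]
  have hbound : ∀ s : ℝ, 0 < s → ∀ u, ‖F s u‖ ≤ |C u| * y₁ := by
    intro s hs u
    have h2s : (0:ℝ) < (2*s)^n := by positivity
    have hK0 : 0 ≤ K s u := Finset.prod_nonneg fun i _ => le_max_right _ _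
    have hKle : K s u ≤ ((2*s)*p)^n := by
      calc K s u ≤ ∏ _i : Fin n, (2*s)*p := by
            refine Finset.prod_le_prod (fun i _ => le_max_right _ _) (fun i _ => ?_)
            refine max_le ?_ (by positivity)
            have h1' := min_le_left (s*p) (u i + s*q)
            have h2' := le_max_left (-(s*p)) (u i - s*q)
            linarith
        _ = ((2*s)*p)^n := by
            rw [Finset.prod_const, Finset.card_univ, Fintype.card_fin]
    have hX : ((2*s)^n)⁻¹ * K s u ≤ y₁ := by
      have : ((2*s)^n)⁻¹ * (((2*s)*p)^n) = y₁ := by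
        rw [mul_pow (2*s) p, ← mul_assoc, inv_mul_cancel₀ h2s.ne', one_mul, hpn]
      calc ((2*s)^n)⁻¹ * K s u ≤ ((2*s)^n)⁻¹ * (((2*s)*p)^n) := by
            exact mul_le_mul_of_nonneg_left hKle (by positivity)
        _ = y₁ := this
    have hX0 : 0 ≤ ((2*s)^n)⁻¹ * K s u := by positivity
    have : ‖F s u‖ = |C u| * (((2*s)^n)⁻¹ * K s u) := by
      rw [hFdef]
      rw [Real.norm_eq_abs, abs_mul, abs_of_nonneg hX0]
    rw [this]
    exact mul_le_mul_of_nonneg_left hX (abs_nonneg _)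
  have hFmeas : ∀ s : ℝ, AEStronglyMeasurable (F s) (volume : Measure (Fin n → ℝ)) := by
    intro s
    apply hC.1.mul
    apply Continuous.aestronglyMeasurable
    apply continuous_const.mul
    apply continuous_finset_prod
    intro i _
    exact ((continuous_const.min ((continuous_apply i).add continuous_const)).sub
      (continuous_const.max ((continuous_apply i).sub continuous_const))).max continuous_const
  have hDCT := tendsto_integral_filter_of_dominated_convergence
      (μ := (volume : Measure (Fin n → ℝ))) (l := atTop)
      (F := F) (f := fun u => C u * y₁) (fun u => |C u| * y₁)
      (Eventually.of_forall fun s => hFmeas s)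
      (by filter_upwards [eventually_gt_atTop (0:ℝ)] with s hs
          exact ae_of_all _ (hbound s hs))
      (hC.abs.mul_const y₁)
      (ae_of_all _ fun u => (hKlim u).const_mul (C u))
  have hfin : (∫ u, C u * y₁) = y₁ * ∫ u, C u := by rw [integral_mul_const, mul_comm]
  rw [hfin] at hDCT
  exact hDCT.congr fun s => (hIs s).symm
end
end
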